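/- arXiv:1404.1352 — 2 statements merged into one kernel-verified Lean document; each statement's English description precedes it below -/
import Mathlib

section
/- Let K be a field and n ≥ 2. In the algebra A below, the elements e_m (m ∈ ℤ/n) are mutually orthogonal idempotents with Σ_m e_m = 1; they satisfy e_{m+1}·x_m·e_m = x_m for all m, and x_l·x_m = 0 for all l, m. Moreover, for every k ∈ ℤ/n, the single n-tuple (a_1, …, a_n) := (x_{k+1}, x_{k+2}, …, x_{k+n}) satisfies the cyclic relations (with i+1 = n and a one-element index family); equivalently, the element x_k ⊗ x_{k−1} ⊗ ⋯ ⊗ x_{k−n+1} ∈ A^{⊗n} gives rise to an A-bimodule map (A^∨)^{⊗_A (n−1)} → A. -/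
open scoped TensorProduct
open PiTensorProduct

/-- The bimodule `M = (ℤ/n → K)` over `R = (ℤ/n → K)`, with left action
`(d • x)(m) = d(m+1)·x(m)` and right action `(x • d)(m) = x(m)·d(m)`. -/
def CycM (n : ℕ) (K : Type*) : Type _ := ZMod n → K

section Instances

variable (n : ℕ) (K : Type*) [Field K]

instance : AddCommGroup (CycM n K) := inferInstanceAs (AddCommGroup (ZMod n → K))

instance : Module K (CycM n K) := inferInstanceAs (Module K (ZMod n → K))

instance : SMul (ZMod n → K) (CycM n K) :=
  ⟨fun d x => fun m => d (m + 1) * x m⟩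

instance : SMul (ZMod n → K)ᵐᵒᵖ (CycM n K) :=
  ⟨fun d x => fun m => x m * d.unop m⟩

instance : Module (ZMod n → K) (CycM n K) where
  one_smul x := funext fun m => one_mul (x m)
  mul_smul d d' x := funext fun m => mul_assoc (d (m + 1)) (d' (m + 1)) (x m)
  smul_zero d := funext fun m => mul_zero (d (m + 1))
  smul_add d x y := funext fun m => mul_add (d (m + 1)) (x m) (y m)
  add_smul d d' x := funext fun m => add_mul (d (m + 1)) (d' (m + 1)) (x m)
  zero_smul x := funext fun m => zero_mul (x m)

instance : Module (ZMod n → K)ᵐᵒᵖ (CycM n K) where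
  one_smul x := funext fun m => mul_one (x m)
  mul_smul d d' x := funext fun m => (mul_assoc (x m) (d'.unop m) (d.unop m)).symm
  smul_zero d := funext fun m => zero_mul (d.unop m)
  smul_add d x y := funext fun m => add_mul (x m) (y m) (d.unop m)
  add_smul d d' x := funext fun m => mul_add (x m) (d.unop m) (d'.unop m)
  zero_smul x := funext fun m => mul_zero (x m)

instance : SMulCommClass (ZMod n → K) (ZMod n → K)ᵐᵒᵖ (CycM n K) :=
  ⟨fun d d' x => funext fun m => (mul_assoc (d (m + 1)) (x m) (d'.unop m)).symm⟩

end Instances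

/-- The algebra `A`: the trivial square-zero extension `R ⊕ M`. -/
abbrev CycA (n : ℕ) (K : Type*) [Field K] : Type _ :=
  TrivSqZeroExt (ZMod n → K) (CycM n K)

/-- The idempotent `e_m = (δ_m, 0)`. -/
noncomputable def eIdem (n : ℕ) (K : Type*) [Field K] (m : ZMod n) : CycA n K :=
  TrivSqZeroExt.inl (Pi.single m 1)

/-- The generator `x_m = (0, δ_m)`. -/
noncomputable def xGen (n : ℕ) (K : Type*) [Field K] (m : ZMod n) : CycA n K :=
  TrivSqZeroExt.inr (M := CycM n K) (Pi.single m 1)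


section Aux

open TrivSqZeroExt

variable (n : ℕ) (K : Type*) [Field K]

lemma opSmul_apply (d : ZMod n → K) (x : CycM n K) (p : ZMod n) :
    (MulOpposite.op d • x) p = x p * d p := rfl

lemma lSmul_apply (d : ZMod n → K) (x : CycM n K) (p : ZMod n) :
    (d • x) p = d (p + 1) * x p := rfl

lemma kSmul_apply (c : K) (x : CycM n K) (p : ZMod n) :
    (c • x) p = c * x p := rfl

lemma xGen_mul (m : ZMod n) (a : CycA n K) :
    xGen n K m * a = fst a m • xGen n K m := by
  nth_rewrite 1 [← inl_fst_add_inr_snd_eq a]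
  rw [xGen, mul_add]
  erw [inr_mul_inl, inr_mul_inr, add_zero, ← inr_smul]
  congr 1
  funext p
  erw [opSmul_apply, kSmul_apply]
  by_cases h : p = m
  · subst h; simp [mul_comm]
  · simp [Pi.single_apply, h]

lemma mul_xGen (m : ZMod n) (a : CycA n K) :
    a * xGen n K m = fst a (m + 1) • xGen n K m := by
  nth_rewrite 1 [← inl_fst_add_inr_snd_eq a]
  rw [xGen, add_mul]
  erw [inl_mul_inr, inr_mul_inr, add_zero, ← inr_smul]
  congr 1
  funext p
  erw [lSmul_apply, kSmul_apply]
  by_cases h : p = m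
  · subst h; simp
  · simp [Pi.single_apply, h]

end Aux

/-- In the algebra `A = R ⊕ M` above, the `e_m` are mutually orthogonal
idempotents summing to `1`, `e_{m+1}·x_m·e_m = x_m`, `x_l·x_m = 0`, and for each
`k ∈ ℤ/n` the `n`-tuple `(x_{k+1}, …, x_{k+n})` satisfies the cyclic relations (with
`i + 1 = n` and a one-element index family), so that `x_k ⊗ x_{k-1} ⊗ ⋯ ⊗ x_{k-n+1}`
gives rise to an `A`-bimodule map `(A^∨)^{⊗_A (n-1)} → A`. -/
theorem cyclic_quiver_trivial_extension
    (n : ℕ) [NeZero n] (hn : 2 ≤ n) (K : Type*) [Field K] :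
    (∀ m : ZMod n, eIdem n K m * eIdem n K m = eIdem n K m) ∧
    (∀ l m : ZMod n, l ≠ m → eIdem n K l * eIdem n K m = 0) ∧
    (∑ m : ZMod n, eIdem n K m) = 1 ∧
    (∀ m : ZMod n, eIdem n K (m + 1) * xGen n K m * eIdem n K m = xGen n K m) ∧
    (∀ l m : ZMod n, xGen n K l * xGen n K m = 0) ∧
    (∀ k : ZMod n, ∀ a : CycA n K,
      (∀ r : ℕ, ∀ hr : r + 1 < n,
        tprod K (Function.update (fun t : Fin n => xGen n K (k + (t : ℕ) + 1))
            ⟨r + 1, hr⟩ (xGen n K (k + (r + 1 : ℕ) + 1) * a)) =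
        tprod K (Function.update (fun t : Fin n => xGen n K (k + (t : ℕ) + 1))
            ⟨r, Nat.lt_of_succ_lt hr⟩ (a * xGen n K (k + (r : ℕ) + 1)))) ∧
      tprod K (Function.update (fun t : Fin n => xGen n K (k + (t : ℕ) + 1))
          ⟨0, by omega⟩ (xGen n K (k + (0 : ℕ) + 1) * a)) =
      tprod K (Function.update (fun t : Fin n => xGen n K (k + (t : ℕ) + 1))
          ⟨n - 1, by omega⟩ (a * xGen n K (k + (n - 1 : ℕ) + 1)))) :=  by
  refine ⟨?_, ?_, ?_, ?_, ?_, ?_⟩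
  · intro m
    simp only [eIdem]
    rw [TrivSqZeroExt.inl_mul_inl]
    congr 1
    funext p
    by_cases h : p = m <;> simp [Pi.single_apply, h]
  · intro l m hlm
    simp only [eIdem]
    rw [TrivSqZeroExt.inl_mul_inl]
    have : (Pi.single l 1 * Pi.single m 1 : ZMod n → K) = 0 := by
      funext p
      by_cases h : p = l <;> by_cases h' : p = m <;>
        simp_all [Pi.single_apply]
    rw [this, TrivSqZeroExt.inl_zero]
  · have h1 : (∑ m : ZMod n, Pi.single m (1 : K)) = (1 : ZMod n → K) := by
      funext p
      simp [Finset.sum_apply, Pi.single_apply]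
    simp only [eIdem, show ∀ r : ZMod n → K, TrivSqZeroExt.inl (M := CycM n K) r =
        TrivSqZeroExt.inlHom (ZMod n → K) (CycM n K) r from fun _ => rfl]
    rw [← map_sum, h1, _root_.map_one]
  · intro m
    rw [eIdem, eIdem, xGen]
    erw [TrivSqZeroExt.inl_mul_inr, TrivSqZeroExt.inr_mul_inl]
    congr 1
    funext p
    erw [opSmul_apply, lSmul_apply]
    by_cases h : p = m
    · subst h; simp
    · simp [Pi.single_apply, h]
  · intro l m
    rw [xGen, xGen]
    erw [TrivSqZeroExt.inr_mul_inr]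
  · intro k a
    have key : ∀ (i : Fin n) (c : K),
        tprod K (Function.update (fun t : Fin n => xGen n K (k + (t : ℕ) + 1)) i
          (c • xGen n K (k + (i : ℕ) + 1))) =
        c • tprod K (fun t : Fin n => xGen n K (k + (t : ℕ) + 1)) := by
      intro i c
      rw [show (c • xGen n K (k + (i : ℕ) + 1)) =
          c • (fun t : Fin n => xGen n K (k + (t : ℕ) + 1)) i from rfl,
        MultilinearMap.map_update_smul, Function.update_eq_self]
    constructor
    · intro r hr
      rw [show (xGen n K (k + (r + 1 : ℕ) + 1) * a) =
          TrivSqZeroExt.fst a (k + (r + 1 : ℕ) + 1) •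
            xGen n K (k + (((⟨r + 1, hr⟩ : Fin n) : ℕ) : ZMod n) + 1) from
          xGen_mul n K _ a,
        show (a * xGen n K (k + (r : ℕ) + 1)) =
          TrivSqZeroExt.fst a (k + (r : ℕ) + 1 + 1) •
            xGen n K (k + (((⟨r, Nat.lt_of_succ_lt hr⟩ : Fin n) : ℕ) : ZMod n) + 1) from
          mul_xGen n K _ a,
        key, key]
      congr 2
      push_cast
      ring
    · rw [show (xGen n K (k + (0 : ℕ) + 1) * a) =
          TrivSqZeroExt.fst a (k + (0 : ℕ) + 1) •
            xGen n K (k + (((⟨0, by omega⟩ : Fin n) : ℕ) : ZMod n) + 1) from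
          xGen_mul n K _ a,
        show (a * xGen n K (k + (n - 1 : ℕ) + 1)) =
          TrivSqZeroExt.fst a (k + (n - 1 : ℕ) + 1 + 1) •
            xGen n K (k + (((⟨n - 1, by omega⟩ : Fin n) : ℕ) : ZMod n) + 1) from
          mul_xGen n K _ a,
        key, key]
      congr 2
      have : ((n - 1 : ℕ) : ZMod n) = -1 := by
        have h1 : ((n : ℕ) : ZMod n) = 0 := ZMod.natCast_self n
        have : ((n - 1 : ℕ) : ZMod n) + 1 = ((n : ℕ) : ZMod n) := by
          rw [← Nat.cast_add_one]
          congr 1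
          omega
        rw [h1] at this
        linear_combination this
      rw [this]
      push_cast
      ring
end

section
/- Let M be a smooth (C^∞) manifold without boundary, μ : M → M a diffeomorphism, and g : M → ℝ a smooth function. Then there exists a smooth function G : ℝ × M → ℝ such that g(x) = G(q, x) − G(q − 1, μ(x)) for all q ∈ ℝ and x ∈ M. (This is the trivialization of the cocycle used in the paper's construction of the primitive θ_E = p dq + θ_M + dG of the symplectic form on the symplectic mapping torus of μ.) -/
open scoped Topology

/-- Auxiliary "Birkhoff sum" `S m x = ∑_{0 ≤ n < m} g (σ^n x)` (with the usual
convention for negative `m`). -/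
noncomputable def auxS {M : Type*} (σ : Equiv.Perm M) (g : M → ℝ) (m : ℤ) (x : M) : ℝ :=
  if 0 ≤ m then ∑ n ∈ Finset.range m.toNat, g ((σ ^ (n : ℤ)) x)
  else -∑ n ∈ Finset.range (-m).toNat, g ((σ ^ (-(n : ℤ) - 1)) x)

lemma auxS_step {M : Type*} (σ : Equiv.Perm M) (g : M → ℝ) (m : ℤ) (x : M) :
    auxS σ g (m + 1) x = auxS σ g m x + g ((σ ^ m) x) := by
  rcases lt_trichotomy m (-1) with h | h | h
  · have h0 : ¬ (0 : ℤ) ≤ m := by omega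
    have h1 : ¬ (0 : ℤ) ≤ m + 1 := by omega
    rw [auxS, auxS, if_neg h0, if_neg h1]
    have hn : (-m).toNat = (-(m + 1)).toNat + 1 := by omega
    rw [hn, Finset.sum_range_succ]
    have h2 : (-(((-(m + 1)).toNat : ℤ)) - 1) = m := by omega
    rw [h2]; ring
  · subst h
    norm_num [auxS]
  · have h0 : (0 : ℤ) ≤ m := by omega
    rw [auxS, auxS, if_pos (by omega), if_pos h0]
    have hn : (m + 1).toNat = m.toNat + 1 := by omega
    rw [hn, Finset.sum_range_succ]
    have h2 : ((m.toNat : ℤ)) = m := by omega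
    rw [h2]

lemma aux_comp {M : Type*} (σ : Equiv.Perm M) (m : ℤ) (x : M) :
    (σ ^ (m - 1)) (σ x) = (σ ^ m) x := by
  rw [← Equiv.Perm.mul_apply, ← zpow_add_one]
  norm_num

lemma auxS_cocycle {M : Type*} (σ : Equiv.Perm M) (g : M → ℝ) (m : ℤ) (x : M) :
    auxS σ g m x - auxS σ g (m - 1) (σ x) = g x := by
  induction m using Int.induction_on with
  | zero =>
      have h1 : ((σ : Equiv.Perm M) ^ (-(0:ℤ) - 1)) (σ x) = x := by
        norm_num [zpow_neg_one]
      norm_num [auxS, h1]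
  | succ k ih =>
      have h1 := auxS_step σ g k x
      have h2 := auxS_step σ g (k - 1) (σ x)
      have h3 : (k : ℤ) - 1 + 1 = k := by ring
      rw [h3] at h2
      have h4 := aux_comp σ k x
      have hgoal : (k : ℤ) + 1 - 1 = k := by ring
      rw [hgoal, h1, h2, h4]
      linarith
  | pred k ih =>
      have h1 := auxS_step σ g (-(k:ℤ) - 1) x
      have h2 := auxS_step σ g (-(k:ℤ) - 1 - 1) (σ x)
      have h3 : -(k : ℤ) - 1 + 1 = -(k:ℤ) := by ring
      rw [h3] at h1
      have h4 := aux_comp σ (-(k:ℤ) - 1) x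
      have h5 : -(k:ℤ) - 1 - 1 + 1 = -(k:ℤ) - 1 := by ring
      rw [h5] at h2
      have h6 : -(k:ℤ) - 1 = -(k:ℤ) - 1 := rfl
      rw [show -(k:ℤ) - 1 - 1 = -(k:ℤ) - 1 - 1 from rfl] at h4 ⊢
      -- ih : auxS σ g (-k) x - auxS σ g (-k - 1) (σ x) = g x
      have hgoal : auxS σ g (-(k:ℤ) - 1) x - auxS σ g (-(k:ℤ) - 1 - 1) (σ x) = g x := by
        have hk : auxS σ g (-(k:ℤ)) x = auxS σ g (-(k:ℤ) - 1) x + g ((σ ^ (-(k:ℤ) - 1)) x) := h1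
        have hk2 : auxS σ g (-(k:ℤ) - 1) (σ x)
            = auxS σ g (-(k:ℤ) - 1 - 1) (σ x) + g ((σ ^ (-(k:ℤ) - 1 - 1)) (σ x)) := h2
        rw [h4] at hk2
        linarith
      exact hgoal

/-- For a smooth boundaryless manifold `M` (modeled on a
finite-dimensional real vector space `E`), a diffeomorphism `μ : M → M`, and a smooth
function `g : M → ℝ`, there is a smooth function `G : ℝ × M → ℝ` with
`g x = G (q, x) − G (q − 1, μ x)` for all `q ∈ ℝ`, `x ∈ M`. -/
theorem exists_smooth_cocycle_trivialization
    {E : Type*} [NormedAddCommGroup E] [NormedSpace ℝ E] [FiniteDimensional ℝ E]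
    {M : Type*} [TopologicalSpace M] [ChartedSpace E M]
    [IsManifold (modelWithCornersSelf ℝ E) (⊤ : ℕ∞) M]
    (μ : Diffeomorph (modelWithCornersSelf ℝ E) (modelWithCornersSelf ℝ E) M M (⊤ : ℕ∞))
    (g : M → ℝ)
    (hg : ContMDiff (modelWithCornersSelf ℝ E) (modelWithCornersSelf ℝ ℝ) (⊤ : ℕ∞) g) :
    ∃ G : ℝ × M → ℝ,
      ContMDiff ((modelWithCornersSelf ℝ ℝ).prod (modelWithCornersSelf ℝ E))
        (modelWithCornersSelf ℝ ℝ) (⊤ : ℕ∞) G ∧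
      ∀ (q : ℝ) (x : M), g x = G (q, x) - G (q - 1, μ x) := by
  let I := modelWithCornersSelf ℝ E
  let J := modelWithCornersSelf ℝ ℝ
  set σ : Equiv.Perm M := μ.toEquiv with hσ
  have hσapp : ∀ x : M, σ x = μ x := fun x => rfl
  have hs1 : ContMDiff I I (⊤ : ℕ∞) fun x => σ x := μ.contMDiff
  have hs2 : ContMDiff I I (⊤ : ℕ∞) fun x => σ⁻¹ x := μ.symm.contMDiff
  have hpow : ∀ (τ : Equiv.Perm M), ContMDiff I I (⊤ : ℕ∞) (fun x => τ x) →
      ∀ n : ℕ, ContMDiff I I (⊤ : ℕ∞) fun x => (τ ^ n) x := by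
    intro τ hτ n
    induction n with
    | zero => simp only [pow_zero, Equiv.Perm.coe_one]; exact contMDiff_id
    | succ k ih =>
        have heq : (fun x => (τ ^ (k + 1)) x) = (fun x => (τ ^ k) x) ∘ fun x => τ x := by
          funext x; simp [pow_succ, Equiv.Perm.mul_apply]
        rw [heq]; exact ih.comp hτ
  have hsm : ∀ m : ℤ, ContMDiff I I (⊤ : ℕ∞) fun x => (σ ^ m) x := by
    intro m
    cases m with
    | ofNat n =>
        have := hpow σ hs1 n
        have heq : (fun x => (σ ^ (Int.ofNat n)) x) = fun x => (σ ^ n) x := by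
          funext x; rw [Int.ofNat_eq_natCast, zpow_natCast]
        rw [heq]; exact this
    | negSucc n =>
        have := hpow σ⁻¹ hs2 (n + 1)
        have heq : (fun x => (σ ^ (Int.negSucc n)) x) = fun x => ((σ⁻¹) ^ (n + 1)) x := by
          funext x; rw [zpow_negSucc, ← inv_pow]
        rw [heq]; exact this
  have hgm : ∀ m : ℤ, ContMDiff I J (⊤ : ℕ∞) fun x => g ((σ ^ m) x) := fun m => hg.comp (hsm m)
  have hS : ∀ m : ℤ, ContMDiff I J (⊤ : ℕ∞) fun x => auxS σ g m x := by
    intro m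
    by_cases h : (0 : ℤ) ≤ m
    · have heq : (fun x => auxS σ g m x)
          = fun x => ∑ n ∈ Finset.range m.toNat, g ((σ ^ (n : ℤ)) x) := by
        funext x; rw [auxS, if_pos h]
      rw [heq]
      exact contMDiff_finset_sum fun i _ => hgm i
    · have heq : (fun x => auxS σ g m x)
          = fun x => -∑ n ∈ Finset.range (-m).toNat, g ((σ ^ (-(n : ℤ) - 1)) x) := by
        funext x; rw [auxS, if_neg h]
      rw [heq]
      apply ContMDiff.neg
      exact contMDiff_finset_sum fun i _ => hgm (-(i : ℤ) - 1)
  set ψ : ℝ → ℝ := fun t => Real.smoothTransition (4 * t - 1) with hψ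
  have hψ0 : ∀ t : ℝ, t ≤ 4⁻¹ → ψ t = 0 := by
    intro t ht
    exact Real.smoothTransition.zero_of_nonpos (by rw [hψ] at *; linarith)
  have hψ1 : ∀ t : ℝ, (2:ℝ)⁻¹ ≤ t → ψ t = 1 := by
    intro t ht
    exact Real.smoothTransition.one_of_one_le (by linarith)
  set G : ℝ × M → ℝ :=
    fun p => ψ (p.1 - ⌊p.1⌋) * g ((σ ^ ⌊p.1⌋) p.2) + auxS σ g ⌊p.1⌋ p.2 with hGdef
  refine ⟨G, ?_, ?_⟩
  · intro p
    obtain ⟨q₀, x₀⟩ := p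
    by_cases hq : ∃ m : ℤ, q₀ = (m : ℝ)
    · obtain ⟨m, rfl⟩ := hq
      have hopen : IsOpen {p : ℝ × M | p.1 ∈ Set.Ioo ((m : ℝ) - 4⁻¹) ((m : ℝ) + 4⁻¹)} :=
        isOpen_Ioo.preimage continuous_fst
      have hmem : ((m : ℝ), x₀) ∈ {p : ℝ × M | p.1 ∈ Set.Ioo ((m : ℝ) - 4⁻¹) ((m : ℝ) + 4⁻¹)} := by
        constructor <;> norm_num
      have hev : G =ᶠ[𝓝 ((m : ℝ), x₀)] fun p => auxS σ g m p.2 := by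
        filter_upwards [hopen.mem_nhds hmem] with p hp
        obtain ⟨hp1, hp2⟩ := hp
        rcases le_or_gt (m : ℝ) p.1 with hc | hc
        · have hfl : ⌊p.1⌋ = m := by
            rw [Int.floor_eq_iff]
            constructor
            · exact_mod_cast hc
            · linarith
          rw [hGdef]
          simp only [hfl]
          rw [hψ0 (p.1 - (m : ℝ)) (by linarith)]
          ring
        · have hfl : ⌊p.1⌋ = m - 1 := by
            rw [Int.floor_eq_iff]
            constructor
            · push_cast; linarith
            · push_cast; linarith
          rw [hGdef]
          simp only [hfl]
          rw [show (((m - 1 : ℤ)) : ℝ) = (m : ℝ) - 1 by push_cast; ring]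
          rw [hψ1 (p.1 - ((m : ℝ) - 1)) (by linarith), one_mul]
          have := auxS_step σ g (m - 1) p.2
          rw [show (m : ℤ) - 1 + 1 = m by ring] at this
          linarith
      exact (((hS m).comp contMDiff_snd).contMDiffAt).congr_of_eventuallyEq hev
    · set m : ℤ := ⌊q₀⌋ with hm
      have hlt : (m : ℝ) < q₀ := by
        rcases lt_or_eq_of_le (Int.floor_le q₀) with h | h
        · exact h
        · exact absurd ⟨m, h.symm⟩ hq
      have hlt2 : q₀ < (m : ℝ) + 1 := by
        have := Int.lt_floor_add_one q₀
        push_cast at this ⊢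
        linarith
      have hopen : IsOpen {p : ℝ × M | p.1 ∈ Set.Ioo ((m : ℝ)) ((m : ℝ) + 1)} :=
        isOpen_Ioo.preimage continuous_fst
      have hmem : (q₀, x₀) ∈ {p : ℝ × M | p.1 ∈ Set.Ioo ((m : ℝ)) ((m : ℝ) + 1)} :=
        ⟨hlt, hlt2⟩
      have hev : G =ᶠ[𝓝 (q₀, x₀)]
          fun p => ψ (p.1 - (m : ℝ)) * g ((σ ^ m) p.2) + auxS σ g m p.2 := by
        filter_upwards [hopen.mem_nhds hmem] with p hp
        obtain ⟨hp1, hp2⟩ := hp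
        have hfl : ⌊p.1⌋ = m := by
          rw [Int.floor_eq_iff]
          exact ⟨hp1.le, by exact_mod_cast hp2⟩
        rw [hGdef]; simp only [hfl]
      have hsmooth1 : ContMDiff (J.prod I) J (⊤ : ℕ∞) fun p : ℝ × M => ψ (p.1 - (m : ℝ)) := by
        have hc : ContDiff ℝ ((⊤ : ℕ∞) : WithTop ℕ∞) fun t : ℝ => ψ (t - (m : ℝ)) := by
          apply Real.smoothTransition.contDiff.comp
          exact (contDiff_const.mul (contDiff_id.sub contDiff_const)).sub contDiff_const
        exact hc.comp_contMDiff contMDiff_fst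
      have hsmooth2 : ContMDiff (J.prod I) J (⊤ : ℕ∞) fun p : ℝ × M => g ((σ ^ m) p.2) :=
        (hgm m).comp contMDiff_snd
      have hsmooth3 : ContMDiff (J.prod I) J (⊤ : ℕ∞) fun p : ℝ × M => auxS σ g m p.2 :=
        (hS m).comp contMDiff_snd
      exact (((hsmooth1.mul hsmooth2).add hsmooth3).contMDiffAt).congr_of_eventuallyEq hev
  · intro q x
    set m : ℤ := ⌊q⌋ with hm
    have hfl : ⌊q - 1⌋ = m - 1 := by
      rw [show q - 1 = q - ((1 : ℤ) : ℝ) by norm_num, Int.floor_sub_intCast]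
    have hG1 : G (q, x) = ψ (q - (m : ℝ)) * g ((σ ^ m) x) + auxS σ g m x := rfl
    have hG2 : G (q - 1, μ x)
        = ψ (q - (m : ℝ)) * g ((σ ^ m) x) + auxS σ g (m - 1) (σ x) := by
      rw [hGdef]
      simp only [hfl]
      rw [show (((m - 1 : ℤ)) : ℝ) = (m : ℝ) - 1 by push_cast; ring]
      rw [show q - 1 - ((m : ℝ) - 1) = q - (m : ℝ) by ring]
      rw [← hσapp x, aux_comp σ m x]
    rw [hG1, hG2]
    have := auxS_cocycle σ g m x
    linarith
end
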